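/- Let N ≥ 1, m > 1, q ∈ (0,1), σ > 0, a ≥ (σ+2)/(m−q), and let A, R > 0 satisfy A^{m−q} R^{a(m−q)−σ−2} ≤ 1/(am(am+N−2)). Define S(x) := A|x|^a for x ∈ ℝ^N (Euclidean norm, real power). Then S is a stationary supersolution of ∂_t u = Δ(u^m) − |x|^σ u^q on B(0,R): for every x ∈ B(0,R) with x ≠ 0, the function y ↦ S(y)^m = A^m|y|^{am} is twice differentiable at x, its Laplacian (the sum over i = 1,…,N of the second partial derivatives ∂²/∂x_i²) at x equals am(am+N−2)A^m|x|^{am−2}, and am(am+N−2)A^m|x|^{am−2} ≤ |x|^σ S(x)^q. -/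

import Mathlib

open Set

noncomputable section

lemma aux_deriv {N : ℕ} (r : ℝ) (y : EuclideanSpace ℝ (Fin N)) (hy : y ≠ 0) :
    HasFDerivAt (fun z : EuclideanSpace ℝ (Fin N) => (‖z‖ ^ 2) ^ r)
      ((r * (‖y‖ ^ 2) ^ (r - 1)) • (2 • innerSL ℝ y)) y := by
  have h2 : (‖y‖ ^ 2 : ℝ) ≠ 0 := pow_ne_zero 2 (norm_ne_zero_iff.mpr hy)
  exact (Real.hasDerivAt_rpow_const (Or.inl h2)).comp_hasFDerivAt y
    (hasStrictFDerivAt_norm_sq y).hasFDerivAt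

/-- **Lemma 3.1 (stationary supersolution).**
Let `N ≥ 1`, `m > 1`, `q ∈ (0,1)`, `σ > 0`, `a ≥ (σ+2)/(m−q)`, and `A, R > 0` with
`A^{m−q} R^{a(m−q)−σ−2} ≤ 1/(am(am+N−2))`.  Set `S(x) := A|x|^a`.  Then for every
`x ∈ B(0,R)`, `x ≠ 0`, the function `y ↦ S(y)^m = A^m|y|^{am}` is twice differentiable
at `x`, its Laplacian at `x` equals `am(am+N−2)A^m|x|^{am−2}`, and this quantity is at
most `|x|^σ S(x)^q`; that is, `S` is a stationary supersolution of
`∂ₜ u = Δ(uᵐ) − |x|^σ u^q` on `B(0,R)`. -/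
theorem stationary_supersolution
    (N : ℕ) (hN : 1 ≤ N) (m q σ : ℝ) (hm : 1 < m) (hq0 : 0 < q) (hq1 : q < 1)
    (hσ0 : 0 < σ) (a A R : ℝ) (hA0 : 0 < A) (hR0 : 0 < R)
    (ha : (σ + 2) / (m - q) ≤ a)
    (hAR : A ^ (m - q) * R ^ (a * (m - q) - σ - 2) ≤ 1 / (a * m * (a * m + N - 2)))
    (S : EuclideanSpace ℝ (Fin N) → ℝ) (hS : ∀ x, S x = A * ‖x‖ ^ a)
    (x : EuclideanSpace ℝ (Fin N)) (hx : x ≠ 0) (hxR : ‖x‖ < R) :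
    ContDiffAt ℝ 2 (fun y : EuclideanSpace ℝ (Fin N) => S y ^ m) x ∧
    (∑ i : Fin N,
        fderiv ℝ (fun y : EuclideanSpace ℝ (Fin N) =>
          fderiv ℝ (fun z : EuclideanSpace ℝ (Fin N) => S z ^ m) y
            (EuclideanSpace.single i 1)) x (EuclideanSpace.single i 1))
      = a * m * (a * m + N - 2) * A ^ m * ‖x‖ ^ (a * m - 2) ∧
    a * m * (a * m + N - 2) * A ^ m * ‖x‖ ^ (a * m - 2) ≤ ‖x‖ ^ σ * S x ^ q := by
  
  have hmq : 0 < m - q := by linarith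
  have ha0 : 0 < a := lt_of_lt_of_le (div_pos (by linarith) hmq) ha
  have haσ : σ + 2 ≤ a * (m - q) := (div_le_iff₀ hmq).mp ha
  have hp2 : 2 < a * m := by nlinarith [mul_pos ha0 hq0]
  have hx0 : (0 : ℝ) < ‖x‖ := norm_pos_iff.mpr hx
  have hx2 : (0 : ℝ) < ‖x‖ ^ 2 := by positivity
  have hN1 : (1 : ℝ) ≤ N := by exact_mod_cast hN
  have hK : 0 < a * m * (a * m + N - 2) := by nlinarith
  -- rewrite the function
  have hfeq : (fun y : EuclideanSpace ℝ (Fin N) => S y ^ m)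
      = fun y : EuclideanSpace ℝ (Fin N) => A ^ m * (‖y‖ ^ 2 : ℝ) ^ (a * m / 2) := by
    funext y
    rw [hS, Real.mul_rpow hA0.le (Real.rpow_nonneg (norm_nonneg y) a)]
    congr 1
    rw [← Real.rpow_natCast ‖y‖ 2, ← Real.rpow_mul (norm_nonneg y),
      ← Real.rpow_mul (norm_nonneg y)]
    congr 1
    push_cast
    ring
  rw [hfeq]
  refine ⟨?_, ?_, ?_⟩
  · -- ContDiffAt
    have h1 : ContDiffAt ℝ 2 (fun t : ℝ => t ^ (a * m / 2)) (‖x‖ ^ 2) :=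
      Real.contDiffAt_rpow_const_of_ne (ne_of_gt hx2)
    exact contDiffAt_const.mul (h1.comp x ((contDiff_norm_sq ℝ).contDiffAt))
  · -- Laplacian computation
    have hD : ∀ y : EuclideanSpace ℝ (Fin N), y ≠ 0 →
        HasFDerivAt (fun y : EuclideanSpace ℝ (Fin N) => A ^ m * (‖y‖ ^ 2 : ℝ) ^ (a * m / 2))
          (A ^ m • ((a * m / 2 * (‖y‖ ^ 2) ^ (a * m / 2 - 1)) • (2 • innerSL ℝ y))) y :=
      fun y hy => (aux_deriv (a * m / 2) y hy).const_mul (A ^ m)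
    have hg : ∀ i : Fin N,
        (fun y : EuclideanSpace ℝ (Fin N) =>
            fderiv ℝ (fun z : EuclideanSpace ℝ (Fin N) => A ^ m * (‖z‖ ^ 2 : ℝ) ^ (a * m / 2)) y
              (EuclideanSpace.single i 1)) =ᶠ[nhds x]
          (fun y : EuclideanSpace ℝ (Fin N) =>
            (A ^ m * (a * m)) * ((‖y‖ ^ 2 : ℝ) ^ (a * m / 2 - 1) * y i)) := by
      intro i
      filter_upwards [isOpen_compl_singleton.eventually_mem (by simpa using hx :
        x ∈ ({0} : Set (EuclideanSpace ℝ (Fin N)))ᶜ)] with y hy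
      rw [(hD y (by simpa using hy)).fderiv]
      simp only [ContinuousLinearMap.coe_smul', Pi.smul_apply, innerSL_apply_apply, smul_eq_mul,
        EuclideanSpace.inner_single_right, RCLike.inner_apply, conj_trivial]
      ring
    have hψ : ∀ i : Fin N,
        HasFDerivAt (fun y : EuclideanSpace ℝ (Fin N) =>
            (A ^ m * (a * m)) * ((‖y‖ ^ 2 : ℝ) ^ (a * m / 2 - 1) * y i))
          ((A ^ m * (a * m)) •
            (((‖x‖ ^ 2 : ℝ) ^ (a * m / 2 - 1)) •
                (EuclideanSpace.proj i : EuclideanSpace ℝ (Fin N) →L[ℝ] ℝ) +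
              (x i) • ((a * m / 2 - 1) * (‖x‖ ^ 2) ^ (a * m / 2 - 1 - 1)) • (2 • innerSL ℝ x))) x :=
      fun i => ((aux_deriv (a * m / 2 - 1) x hx).mul
        (EuclideanSpace.proj i : EuclideanSpace ℝ (Fin N) →L[ℝ] ℝ).hasFDerivAt).const_mul _
    have hterm : ∀ i : Fin N,
        fderiv ℝ (fun y : EuclideanSpace ℝ (Fin N) =>
          fderiv ℝ (fun z : EuclideanSpace ℝ (Fin N) => A ^ m * (‖z‖ ^ 2 : ℝ) ^ (a * m / 2)) y
            (EuclideanSpace.single i 1)) x (EuclideanSpace.single i 1)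
        = (A ^ m * (a * m)) * (‖x‖ ^ 2 : ℝ) ^ (a * m / 2 - 1)
          + (A ^ m * (a * m) * 2 * (a * m / 2 - 1) * (‖x‖ ^ 2) ^ (a * m / 2 - 1 - 1))
            * (x i * x i) := by
      intro i
      have hproj : (EuclideanSpace.proj i : EuclideanSpace ℝ (Fin N) →L[ℝ] ℝ)
          (EuclideanSpace.single i 1) = 1 := by simp
      rw [(hg i).fderiv_eq, (hψ i).fderiv]
      simp only [ContinuousLinearMap.coe_smul', Pi.smul_apply, ContinuousLinearMap.add_apply,
        ContinuousLinearMap.coe_smul, innerSL_apply_apply, smul_eq_mul,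
        EuclideanSpace.inner_single_right, RCLike.inner_apply, conj_trivial,
        hproj]
      ring
    have hsum : ∑ i : Fin N, x i * x i = ‖x‖ ^ 2 := by
      rw [← real_inner_self_eq_norm_sq]
      simp only [PiLp.inner_apply, RCLike.inner_apply, conj_trivial, mul_comm]
    have e2 : (‖x‖ ^ 2 : ℝ) ^ (a * m / 2 - 1 - 1) * ‖x‖ ^ 2 = (‖x‖ ^ 2 : ℝ) ^ (a * m / 2 - 1) := by
      rw [← Real.rpow_add_one (ne_of_gt hx2), sub_add_cancel]
    have e1 : (‖x‖ ^ 2 : ℝ) ^ (a * m / 2 - 1) = ‖x‖ ^ (a * m - 2) := by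
      rw [← Real.rpow_natCast ‖x‖ 2, ← Real.rpow_mul (norm_nonneg x)]
      congr 1
      push_cast
      ring
    calc (∑ i : Fin N,
        fderiv ℝ (fun y : EuclideanSpace ℝ (Fin N) =>
          fderiv ℝ (fun z : EuclideanSpace ℝ (Fin N) => A ^ m * (‖z‖ ^ 2 : ℝ) ^ (a * m / 2)) y
            (EuclideanSpace.single i 1)) x (EuclideanSpace.single i 1))
        = ∑ i : Fin N, ((A ^ m * (a * m)) * (‖x‖ ^ 2 : ℝ) ^ (a * m / 2 - 1)
          + (A ^ m * (a * m) * 2 * (a * m / 2 - 1) * (‖x‖ ^ 2) ^ (a * m / 2 - 1 - 1))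
            * (x i * x i)) := Finset.sum_congr rfl fun i _ => hterm i
      _ = (N : ℝ) * ((A ^ m * (a * m)) * (‖x‖ ^ 2 : ℝ) ^ (a * m / 2 - 1))
          + (A ^ m * (a * m) * 2 * (a * m / 2 - 1) * (‖x‖ ^ 2) ^ (a * m / 2 - 1 - 1))
            * ∑ i : Fin N, x i * x i := by
          rw [Finset.sum_add_distrib, Finset.sum_const, ← Finset.mul_sum]
          simp [nsmul_eq_mul]
      _ = (N : ℝ) * ((A ^ m * (a * m)) * (‖x‖ ^ 2 : ℝ) ^ (a * m / 2 - 1))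
          + (A ^ m * (a * m) * 2 * (a * m / 2 - 1))
            * ((‖x‖ ^ 2 : ℝ) ^ (a * m / 2 - 1 - 1) * ‖x‖ ^ 2) := by rw [hsum]; ring
      _ = a * m * (a * m + N - 2) * A ^ m * ‖x‖ ^ (a * m - 2) := by
          rw [e2, e1]; ring
  · -- the inequality
    have hRe : 0 ≤ a * (m - q) - σ - 2 := by linarith
    have key : (a * m * (a * m + N - 2)) * (A ^ (m - q) * ‖x‖ ^ (a * (m - q) - σ - 2)) ≤ 1 := by
      calc (a * m * (a * m + N - 2)) * (A ^ (m - q) * ‖x‖ ^ (a * (m - q) - σ - 2))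
          ≤ (a * m * (a * m + N - 2)) * (A ^ (m - q) * R ^ (a * (m - q) - σ - 2)) := by
            apply mul_le_mul_of_nonneg_left _ hK.le
            exact mul_le_mul_of_nonneg_left
              (Real.rpow_le_rpow hx0.le hxR.le hRe) (Real.rpow_nonneg hA0.le _)
        _ ≤ (a * m * (a * m + N - 2)) * (1 / (a * m * (a * m + N - 2))) :=
            mul_le_mul_of_nonneg_left hAR hK.le
        _ = 1 := by rw [mul_one_div_cancel hK.ne']
    have hA' : A ^ (m - q) * A ^ q = A ^ m := by
      rw [← Real.rpow_add hA0]; congr 1; ring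
    have hx' : ‖x‖ ^ (a * (m - q) - σ - 2) * ‖x‖ ^ (σ + a * q) = ‖x‖ ^ (a * m - 2) := by
      rw [← Real.rpow_add hx0]; congr 1; ring
    have hrhs : ‖x‖ ^ σ * (A * ‖x‖ ^ a) ^ q = A ^ q * ‖x‖ ^ (σ + a * q) := by
      rw [Real.mul_rpow hA0.le (Real.rpow_nonneg (norm_nonneg x) a),
        ← Real.rpow_mul (norm_nonneg x), Real.rpow_add hx0]
      ring
    rw [hS]
    calc a * m * (a * m + N - 2) * A ^ m * ‖x‖ ^ (a * m - 2)
        = ((a * m * (a * m + N - 2)) * (A ^ (m - q) * ‖x‖ ^ (a * (m - q) - σ - 2)))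
          * (A ^ q * ‖x‖ ^ (σ + a * q)) := by rw [← hA', ← hx']; ring
      _ ≤ 1 * (A ^ q * ‖x‖ ^ (σ + a * q)) :=
          mul_le_mul_of_nonneg_right key (by positivity)
      _ = ‖x‖ ^ σ * (A * ‖x‖ ^ a) ^ q := by rw [one_mul, hrhs]
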